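/- Let k be a field and f(Z,T) = a₀(Z) + a₁(Z)·T ∈ k[Z,T] with a₀, a₁ ∈ k[Z]. Suppose f is a line (k[Z,T]/(f) ≅ k[X]). Then f is a variable of k[Z,T], i.e., there exists g ∈ k[Z,T] with k[Z,T] = k[f,g]. -/

import Mathlib

open Polynomial

private lemma aux_C_eq_aeval {k : Type*} [Field k] (g : Polynomial k) :
    (C g : Polynomial (Polynomial k)) = aeval (C X : Polynomial (Polynomial k)) g := by
  induction g using Polynomial.induction_on with
  | C a => simp [Polynomial.algebraMap_apply]
  | add p q hp hq => simp [hp, hq]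
  | monomial n a h => simp [map_mul, map_pow, pow_succ, ← mul_assoc] at h ⊢

private lemma aux_adjoin_XC {k : Type*} [Field k] :
    Algebra.adjoin k {(X : Polynomial (Polynomial k)), C X} = ⊤ := by
  rw [eq_top_iff]
  rintro F -
  induction F using Polynomial.induction_on with
  | C g =>
      have h2 : aeval (C X : Polynomial (Polynomial k)) g ∈
          Algebra.adjoin k {(C X : Polynomial (Polynomial k))} := by
        rw [Algebra.adjoin_singleton_eq_range_aeval]; exact ⟨g, rfl⟩
      have h3 := Algebra.adjoin_mono
        (show ({(C X : Polynomial (Polynomial k))} : Set (Polynomial (Polynomial k))) ⊆ {X, C X} by simp) h2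
      rwa [← aux_C_eq_aeval] at h3
  | add p q hp hq => exact Subalgebra.add_mem _ hp hq
  | monomial n a h =>
      rw [pow_succ, ← mul_assoc]
      exact Subalgebra.mul_mem _ h (Algebra.subset_adjoin (by simp))

private lemma aux_algebraMap {k : Type*} [Field k] (c : k) :
    algebraMap k (Polynomial (Polynomial k)) c = C (C c) := by
  simp [Polynomial.algebraMap_apply, Polynomial.algebraMap_eq]

set_option maxHeartbeats 1000000 in
private lemma key_lemma {k : Type*} [Field k] (a₀ a₁ : Polynomial k)
    (e : (Polynomial (Polynomial k) ⧸
        Ideal.span {(C a₀ + C a₁ * X : Polynomial (Polynomial k))})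
      ≃ₐ[k] Polynomial k) :
    IsUnit a₁ ∨ (a₁ = 0 ∧ a₀.natDegree = 1) := by
  set f : Polynomial (Polynomial k) := C a₀ + C a₁ * X with hf
  let φ : Polynomial (Polynomial k) →ₐ[k] Polynomial k :=
    (e : _ →ₐ[k] Polynomial k).comp (Ideal.Quotient.mkₐ k (Ideal.span {f}))
  have hφ : ∀ F, φ F = e (Ideal.Quotient.mk _ F) := fun F => rfl
  have hker : ∀ F, φ F = 0 ↔ f ∣ F := by
    intro F
    constructor
    · intro h
      have : Ideal.Quotient.mk (Ideal.span {f}) F = 0 := by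
        apply e.injective; rw [← hφ, h, map_zero]
      exact Ideal.mem_span_singleton.mp (Ideal.Quotient.eq_zero_iff_mem.mp this)
    · intro h
      have : Ideal.Quotient.mk (Ideal.span {f}) F = 0 :=
        Ideal.Quotient.eq_zero_iff_mem.mpr (Ideal.mem_span_singleton.mpr h)
      rw [hφ, this, map_zero]
  have hsurj : Function.Surjective φ := by
    intro y
    obtain ⟨x, hx⟩ := e.surjective y
    obtain ⟨F, hF⟩ := Ideal.Quotient.mk_surjective x
    exact ⟨F, by rw [hφ, hF, hx]⟩
  set p : Polynomial k := φ (C X) with hp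
  set q : Polynomial k := φ X with hq
  have hCg : ∀ g : Polynomial k, φ (C g) = aeval p g := by
    intro g
    rw [aux_C_eq_aeval, ← Polynomial.aeval_algHom_apply]
  have hφf : φ f = 0 := (hker f).mpr dvd_rfl
  have hrel : aeval p a₀ + aeval p a₁ * q = 0 := by
    rw [← hCg, ← hCg]
    simpa [hf, map_add, map_mul] using hφf
  have hcomp : ∀ g h : Polynomial k, aeval h g = g.comp h := by
    intro g h
    rw [Polynomial.aeval_def, Polynomial.comp, Polynomial.algebraMap_eq]
  -- adjoin of p, q is everything
  have hadj : Algebra.adjoin k {p, q} = ⊤ := by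
    have h1 := AlgHom.map_adjoin φ {(X : Polynomial (Polynomial k)), C X}
    rw [aux_adjoin_XC] at h1
    have himg : φ '' {(X : Polynomial (Polynomial k)), C X} = {q, p} := by
      simp [Set.image_pair, hp, hq]
    rw [himg] at h1
    rw [Set.pair_comm p q, ← h1, Algebra.map_top]
    exact (AlgHom.range_eq_top _).mpr hsurj
  -- the denominator claim
  have hden' : ∀ x ∈ Algebra.adjoin k {p, q}, ∃ (n : ℕ) (h : Polynomial k),
      (aeval p a₁) ^ n * x = aeval p h := by
    intro x hx
    induction hx using Algebra.adjoin_induction with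
    | mem x hx =>
        rcases hx with h | h
        · exact ⟨0, X, by simp [h]⟩
        · refine ⟨1, -a₀, ?_⟩
          rw [h, map_neg, pow_one]
          linear_combination hrel
    | algebraMap r => exact ⟨0, C r, by simp⟩
    | add x y hx hy ihx ihy =>
        obtain ⟨m, u, hu⟩ := ihx
        obtain ⟨n, v, hv⟩ := ihy
        refine ⟨m + n, a₁ ^ n * u + a₁ ^ m * v, ?_⟩
        have hs : (aeval p) (a₁ ^ n * u + a₁ ^ m * v)
            = (aeval p a₁) ^ n * aeval p u + (aeval p a₁) ^ m * aeval p v := by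
          simp [map_add, map_mul, map_pow]
        rw [hs, ← hu, ← hv]; ring
    | mul x y hx hy ihx ihy =>
        obtain ⟨m, u, hu⟩ := ihx
        obtain ⟨n, v, hv⟩ := ihy
        refine ⟨m + n, u * v, ?_⟩
        have hs : (aeval p) (u * v) = aeval p u * aeval p v := by simp [map_mul]
        rw [hs, ← hu, ← hv]; ring
  by_cases h1 : a₁ = 0
  · -- case a₁ = 0
    subst h1
    right
    refine ⟨rfl, ?_⟩
    have hrel0 : aeval p a₀ = 0 := by simpa using hrel
    by_cases hp0 : p.natDegree = 0
    · -- p constant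
      have hpc : p = C (p.coeff 0) := eq_C_of_natDegree_eq_zero hp0
      have hz : φ (C X - algebraMap k _ (p.coeff 0)) = 0 := by
        rw [map_sub, ← hp, AlgHom.commutes, Polynomial.algebraMap_eq, sub_eq_zero]
        exact hpc
      have hdvd : f ∣ C (X - C (p.coeff 0)) := by
        rw [← hker]
        convert hz using 2
        rw [map_sub, aux_algebraMap]
      have hfC : f = C a₀ := by rw [hf]; simp
      have hdvd0 : a₀ ∣ X - C (p.coeff 0) := by
        obtain ⟨G, hG⟩ := hdvd
        rw [hfC] at hG
        refine ⟨Polynomial.constantCoeff G, ?_⟩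
        have := congrArg Polynomial.constantCoeff hG
        simpa using this
      have hne : (X - C (p.coeff 0) : Polynomial k) ≠ 0 := X_sub_C_ne_zero _
      have hle : a₀.natDegree ≤ 1 := by
        have := natDegree_le_of_dvd hdvd0 hne
        simpa [natDegree_X_sub_C] using this
      have ha0ne : a₀ ≠ 0 := by
        rintro rfl
        exact hne (zero_dvd_iff.mp hdvd0)
      by_contra hne1
      have h0deg : a₀.natDegree = 0 := by omega
      have hu : IsUnit f := by
        rw [hfC, eq_C_of_natDegree_eq_zero h0deg]
        refine isUnit_C.mpr (isUnit_C.mpr (isUnit_iff_ne_zero.mpr ?_))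
        intro hc
        apply ha0ne
        rw [eq_C_of_natDegree_eq_zero h0deg, hc, map_zero]
      have := hu.map φ
      rw [hφf] at this
      simpa using this
    · -- p nonconstant : then a₀ = 0 and we get a contradiction
      exfalso
      have ha0 : a₀ = 0 := by
        rw [hcomp] at hrel0
        rcases Polynomial.comp_eq_zero_iff.mp hrel0 with h | ⟨-, hc⟩
        · exact h
        · exact absurd (by rw [hc]; exact natDegree_C _) hp0
      have hf0 : f = 0 := by rw [hf, ha0]; simp
      have hinj : Function.Injective φ := by
        intro x y hxy
        have hz : φ (x - y) = 0 := by rw [map_sub, hxy, sub_self]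
        have := (hker _).mp hz
        rw [hf0, zero_dvd_iff] at this
        exact sub_eq_zero.mp this
      let ψ := RingEquiv.ofBijective (φ : Polynomial (Polynomial k) →+* Polynomial k)
        ⟨hinj, hsurj⟩
      have hPIR : IsPrincipalIdealRing (Polynomial (Polynomial k)) :=
        IsPrincipalIdealRing.of_surjective (ψ.symm : Polynomial k →+* _) ψ.symm.surjective
      set g : Polynomial (Polynomial k) :=
        Submodule.IsPrincipal.generator (Ideal.span {(X : Polynomial (Polynomial k)), C X})
        with hgdef
      have hg : Ideal.span {(X : Polynomial (Polynomial k)), C X} = Ideal.span {g} :=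
        (Ideal.span_singleton_generator _).symm
      have hgX : g ∣ (X : Polynomial (Polynomial k)) := by
        have hm : (X : Polynomial (Polynomial k)) ∈
            Ideal.span {(X : Polynomial (Polynomial k)), C X} :=
          Ideal.subset_span (by simp)
        rw [hg] at hm
        exact Ideal.mem_span_singleton.mp hm
      have hgCX : g ∣ (C X : Polynomial (Polynomial k)) := by
        have hm : (C X : Polynomial (Polynomial k)) ∈
            Ideal.span {(X : Polynomial (Polynomial k)), C X} :=
          Ideal.subset_span (by simp)
        rw [hg] at hm
        exact Ideal.mem_span_singleton.mp hm
      obtain ⟨u, hu⟩ := hgX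
      rcases (Polynomial.prime_X (R := Polynomial k)).irreducible.isUnit_or_isUnit hu
        with hg1 | hu1
      · -- g unit, so 1 ∈ (X, C X), contradiction
        have htop : Ideal.span {(X : Polynomial (Polynomial k)), C X} = ⊤ := by
          rw [hg]
          exact Ideal.span_singleton_eq_top.mpr hg1
        have h1m : (1 : Polynomial (Polynomial k)) ∈
            Ideal.span {(X : Polynomial (Polynomial k)), C X} := by
          rw [htop]; trivial
        obtain ⟨u', v', huv⟩ := Ideal.mem_span_pair.mp h1m
        have hc := congrArg Polynomial.constantCoeff huv
        simp [map_add, map_mul] at hc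
        exact Polynomial.not_isUnit_X
          (IsUnit.of_mul_eq_one _ ((mul_comm _ _).trans hc))
      · -- X divides g, hence X ∣ C X, contradiction
        obtain ⟨w, hw⟩ := hu1
        have hXg : (X : Polynomial (Polynomial k)) ∣ g :=
          ⟨↑w⁻¹, by rw [hu, ← hw, mul_assoc, Units.mul_inv, mul_one]⟩
        obtain ⟨v, hv⟩ := hXg.trans hgCX
        have hc := congrArg (fun F => Polynomial.coeff F 0) hv
        simp [Polynomial.mul_coeff_zero] at hc
  · -- case a₁ ≠ 0
    left
    have hfdeg : f.natDegree = 1 := by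
      rw [hf, add_comm]
      exact natDegree_linear (by simpa using h1)
    have hpd : p.natDegree ≠ 0 := by
      intro hd0
      have hpc : p = C (p.coeff 0) := eq_C_of_natDegree_eq_zero hd0
      have hz : φ (C X - algebraMap k _ (p.coeff 0)) = 0 := by
        rw [map_sub, ← hp, AlgHom.commutes, Polynomial.algebraMap_eq, sub_eq_zero]
        exact hpc
      have hdvd : f ∣ C (X - C (p.coeff 0)) := by
        rw [← hker]
        convert hz using 2
        rw [map_sub, aux_algebraMap]
      have hne : (C (X - C (p.coeff 0)) : Polynomial (Polynomial k)) ≠ 0 := by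
        rw [Ne, Polynomial.C_eq_zero]
        exact X_sub_C_ne_zero _
      have := natDegree_le_of_dvd hdvd hne
      rw [hfdeg, natDegree_C] at this
      omega
    obtain ⟨n, h, he⟩ := hden' X (by rw [hadj]; trivial)
    have hAne : aeval p a₁ ≠ 0 := by
      intro h0
      rw [hcomp] at h0
      rcases Polynomial.comp_eq_zero_iff.mp h0 with h' | ⟨-, hc⟩
      · exact h1 h'
      · exact hpd (by rw [hc]; exact natDegree_C _)
    have hhne : h ≠ 0 := by
      intro h0
      rw [h0, map_zero] at he
      exact mul_ne_zero (pow_ne_zero _ hAne) X_ne_zero he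
    have hdeg : n * (a₁.natDegree * p.natDegree) + 1 = h.natDegree * p.natDegree := by
      have hd := congrArg natDegree he
      rw [natDegree_mul (pow_ne_zero _ hAne) X_ne_zero, natDegree_pow, natDegree_X,
        hcomp, natDegree_comp, hcomp, natDegree_comp] at hd
      exact hd
    have hd1 : p.natDegree = 1 := by
      have hdvd1 : p.natDegree ∣ 1 := by
        have h2 : p.natDegree ∣ h.natDegree * p.natDegree := dvd_mul_left _ _
        have h3 : p.natDegree ∣ n * (a₁.natDegree * p.natDegree) :=
          (dvd_mul_left _ _).mul_left n
        have h4 : h.natDegree * p.natDegree - n * (a₁.natDegree * p.natDegree) = 1 := by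
          omega
        rw [← h4]
        exact Nat.dvd_sub h2 h3
      exact Nat.dvd_one.mp hdvd1
    -- aeval p is bijective
    have hc1 : p.coeff 1 ≠ 0 := by
      rw [← hd1]
      intro hc
      exact hpd (by rw [(leadingCoeff_eq_zero.mp hc : p = 0)]; simp)
    have hXr : (X : Polynomial k) ∈ (aeval p : Polynomial k →ₐ[k] Polynomial k).range := by
      have hval : aeval p (C (p.coeff 1)⁻¹ * (X - C (p.coeff 0))) = X := by
        set c1 := p.coeff 1 with hc1def
        set c0 := p.coeff 0 with hc0def
        have hpe : p = C c1 * X + C c0 := eq_X_add_C_of_natDegree_le_one hd1.le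
        rw [map_mul, map_sub, aeval_X, aeval_C, aeval_C, Polynomial.algebraMap_eq, hpe]
        have hs : C c1 * X + C c0 - C c0 = C c1 * X := by ring
        rw [hs, ← mul_assoc, ← C_mul, inv_mul_cancel₀ hc1, C_1, one_mul]
      exact ⟨_, hval⟩
    have hrange : (aeval p : Polynomial k →ₐ[k] Polynomial k).range = ⊤ := by
      rw [eq_top_iff, ← Polynomial.adjoin_X (R := k)]
      exact Algebra.adjoin_le (Set.singleton_subset_iff.mpr hXr)
    obtain ⟨r, hr⟩ : ∃ r, aeval p r = q := by
      have : q ∈ (aeval p : Polynomial k →ₐ[k] Polynomial k).range := by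
        rw [hrange]; trivial
      exact this
    have hinj : ∀ g : Polynomial k, aeval p g = 0 → g = 0 := by
      intro g hg
      rw [hcomp] at hg
      rcases Polynomial.comp_eq_zero_iff.mp hg with h' | ⟨-, hc⟩
      · exact h'
      · exfalso
        apply hpd
        rw [hc]
        exact natDegree_C _
    have hrel2 : a₀ + a₁ * r = 0 := by
      apply hinj
      rw [map_add, map_mul, hr]
      exact hrel
    have hfact : f = C a₁ * (X - C r) := by
      have ha₀ : a₀ = -(a₁ * r) := eq_neg_of_add_eq_zero_left hrel2
      rw [hf, ha₀, map_neg, map_mul]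
      ring
    have hzero : φ (C a₁) * φ (X - C r) = 0 := by
      rw [← map_mul, ← hfact]
      exact hφf
    rcases mul_eq_zero.mp hzero with h0 | h0
    · exfalso
      have hdvd : f ∣ C a₁ := (hker _).mp h0
      have hCane : (C a₁ : Polynomial (Polynomial k)) ≠ 0 := by
        rw [Ne, Polynomial.C_eq_zero]; exact h1
      have := natDegree_le_of_dvd hdvd hCane
      rw [hfdeg, natDegree_C] at this
      omega
    · have hdvd : f ∣ (X - C r) := (hker _).mp h0
      obtain ⟨G, hG⟩ := hdvd
      rw [hfact] at hG
      have hne : (X - C r : Polynomial (Polynomial k)) ≠ 0 := X_sub_C_ne_zero _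
      have hcan : (X - C r : Polynomial (Polynomial k)) * 1
          = (X - C r) * (C a₁ * G) := by
        rw [mul_one]
        nth_rewrite 1 [hG]
        ring
      have h1' := mul_left_cancel₀ hne hcan
      exact isUnit_C.mp (IsUnit.of_mul_eq_one _ h1'.symm)

open Polynomial in
/-- If `f = a₀(Z) + a₁(Z)T` is a line in `k[Z,T]`, then `f` is a variable of
`k[Z,T]`: there is `g` with `k[Z,T] = k[f,g]`. Here `k[Z,T]` is
`Polynomial (Polynomial k)` with `T` the outer variable. -/
theorem line_linear_in_T_is_variable
    {k : Type*} [Field k] (a₀ a₁ : Polynomial k)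
    (hline : Nonempty ((Polynomial (Polynomial k) ⧸
        Ideal.span {(C a₀ + C a₁ * X : Polynomial (Polynomial k))})
      ≃ₐ[k] Polynomial k)) :
    ∃ g : Polynomial (Polynomial k),
      Algebra.adjoin k {(C a₀ + C a₁ * X : Polynomial (Polynomial k)), g}
        = (⊤ : Subalgebra k (Polynomial (Polynomial k))) := by
  obtain ⟨e⟩ := hline
  rcases key_lemma a₀ a₁ e with hu | ⟨h1, hdeg⟩
  · -- a₁ is a unit : take g = C X
    obtain ⟨c, hc, hca⟩ := Polynomial.isUnit_iff.mp hu
    refine ⟨C X, ?_⟩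
    rw [eq_top_iff, ← aux_adjoin_XC]
    apply Algebra.adjoin_le
    intro x hx
    set f : Polynomial (Polynomial k) := C a₀ + C a₁ * X with hf
    have hCXmem : (C X : Polynomial (Polynomial k)) ∈ Algebra.adjoin k {f, C X} :=
      Algebra.subset_adjoin (by simp)
    rcases hx with hx | hx
    · -- x = X
      subst hx
      have hCa₀ : (C a₀ : Polynomial (Polynomial k)) ∈ Algebra.adjoin k {f, C X} := by
        have hmem : aeval (C X : Polynomial (Polynomial k)) a₀ ∈
            Algebra.adjoin k {(C X : Polynomial (Polynomial k))} := by
          rw [Algebra.adjoin_singleton_eq_range_aeval]; exact ⟨a₀, rfl⟩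
        have h3 := Algebra.adjoin_mono
          (show ({(C X : Polynomial (Polynomial k))} : Set (Polynomial (Polynomial k))) ⊆ {f, C X} by simp) hmem
        rwa [← aux_C_eq_aeval] at h3
      have hfm : f ∈ Algebra.adjoin k {f, C X} := Algebra.subset_adjoin (by simp)
      have hcne : c ≠ 0 := hc.ne_zero
      have hX_eq : (X : Polynomial (Polynomial k)) = algebraMap k _ c⁻¹ * (f - C a₀) := by
        rw [aux_algebraMap]
        have hsub : f - C a₀ = C a₁ * X := by rw [hf]; ring
        rw [hsub, ← hca, ← mul_assoc, ← C_mul, ← C_mul, inv_mul_cancel₀ hcne, C_1, C_1,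
          one_mul]
      rw [hX_eq]
      exact Subalgebra.mul_mem _ (Subalgebra.algebraMap_mem _ _)
        (Subalgebra.sub_mem _ hfm hCa₀)
    · -- x = C X
      simp only [Set.mem_singleton_iff] at hx
      subst hx
      exact hCXmem
  · -- a₁ = 0 and a₀ has degree 1 : take g = X
    subst h1
    refine ⟨X, ?_⟩
    rw [eq_top_iff, ← aux_adjoin_XC]
    apply Algebra.adjoin_le
    intro x hx
    set f : Polynomial (Polynomial k) := C a₀ + C 0 * X with hf
    have hXmem : (X : Polynomial (Polynomial k)) ∈ Algebra.adjoin k {f, X} :=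
      Algebra.subset_adjoin (by simp)
    rcases hx with hx | hx
    · subst hx
      exact hXmem
    · simp only [Set.mem_singleton_iff] at hx
      subst hx
      have ha0ne : a₀ ≠ 0 := fun h => by simp [h] at hdeg
      have hc1 : a₀.coeff 1 ≠ 0 := by
        rw [← hdeg]
        exact mt leadingCoeff_eq_zero.mp ha0ne
      have hpe : a₀ = C (a₀.coeff 1) * X + C (a₀.coeff 0) :=
        eq_X_add_C_of_natDegree_le_one hdeg.le
      have hfm : f ∈ Algebra.adjoin k {f, X} := Algebra.subset_adjoin (by simp)
      have hCX_eq : (C X : Polynomial (Polynomial k))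
          = algebraMap k _ (a₀.coeff 1)⁻¹ * (f - algebraMap k _ (a₀.coeff 0)) := by
        rw [aux_algebraMap, aux_algebraMap]
        have hsub : f - C (C (a₀.coeff 0)) = C (C (a₀.coeff 1)) * C X := by
          rw [hf]
          nth_rewrite 1 [hpe]
          simp only [map_add, map_mul, map_zero, zero_mul, add_zero, C_0]
          ring
        have hone : (C (C (a₀.coeff 1)⁻¹) : Polynomial (Polynomial k))
            * C (C (a₀.coeff 1)) = 1 := by
          rw [← C_mul, ← C_mul, inv_mul_cancel₀ hc1, C_1, C_1]
        rw [hsub, ← mul_assoc, hone, one_mul]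
      rw [hCX_eq]
      exact Subalgebra.mul_mem _ (Subalgebra.algebraMap_mem _ _)
        (Subalgebra.sub_mem _ hfm (Subalgebra.algebraMap_mem _ _))
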